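/- arXiv:2203.01210 — 7 statements merged into one kernel-verified Lean document; each statement's English description precedes it below -/
import Mathlib

section
/- For each vertex i of the defining graph, the canonical homomorphism from the vertex group G_i to the graph product Γ = Γ(𝒢, (G_i)_{i∈I}) is injective. -/
/-- The commutation relators of a graph product along the graph with adjacency `adj`. -/
def graphProdRels {I : Type*} (adj : I → I → Prop) (G : I → Type*) [∀ i, Group (G i)] :
    Set (Monoid.CoprodI G) :=
  { x | ∃ (i j : I), adj i j ∧ ∃ (gi : G i) (gj : G j),
      x = Monoid.CoprodI.of gi * Monoid.CoprodI.of gj *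
        (Monoid.CoprodI.of gi)⁻¹ * (Monoid.CoprodI.of gj)⁻¹ }

/-- The graph product of the groups `G i` along the graph with adjacency relation `adj`:
the quotient of the free product by the normal closure of the commutation relators. -/
abbrev GraphProd {I : Type*} (adj : I → I → Prop) (G : I → Type*) [∀ i, Group (G i)] :
    Type _ :=
  Monoid.CoprodI G ⧸ Subgroup.normalClosure (graphProdRels adj G)

/-- The canonical homomorphism from a vertex group into the graph product. -/
def GraphProd.of {I : Type*} (adj : I → I → Prop) (G : I → Type*) [∀ i, Group (G i)]
    (i : I) : G i →* GraphProd adj G :=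
  (QuotientGroup.mk' _).comp Monoid.CoprodI.of

/-- The parabolic subgroup `Γ_J` generated by the images of the `G j`, `j ∈ J`. -/
def GraphProd.parab {I : Type*} (adj : I → I → Prop) (G : I → Type*) [∀ i, Group (G i)]
    (J : Set I) : Subgroup (GraphProd adj G) :=
  ⨆ j ∈ J, (GraphProd.of adj G j).range

open Classical

/-- Projection of the vertex groups onto `G i`: identity on `G i`, trivial elsewhere. -/
noncomputable def graphProdProj {I : Type*} (G : I → Type*) [∀ i, Group (G i)] (i : I) :
    ∀ j, G j →* G i := fun j =>
  if h : j = i then (by subst h; exact MonoidHom.id (G j)) else 1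

lemma graphProdProj_self {I : Type*} (G : I → Type*) [∀ i, Group (G i)] (i : I)
    (g : G i) : graphProdProj G i i g = g := by
  simp only [graphProdProj, dif_pos rfl]
  rfl

lemma graphProdProj_ne {I : Type*} (G : I → Type*) [∀ i, Group (G i)] {i j : I}
    (h : j ≠ i) (g : G j) : graphProdProj G i j g = 1 := by
  simp only [graphProdProj, dif_neg h]
  rfl

/-- For each vertex `i` of the defining (simplicial) graph, the canonical
homomorphism from the vertex group `G i` to the graph product is injective. -/
theorem graphProd_of_injective {I : Type*} (adj : I → I → Prop) (G : I → Type*)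
    [∀ i, Group (G i)] (hsymm : Symmetric adj) (hirr : ∀ i, ¬ adj i i) (i : I) :
    Function.Injective (GraphProd.of adj G i) := by
  classical
  set φ : Monoid.CoprodI G →* G i := Monoid.CoprodI.lift (graphProdProj G i) with hφ
  have hker : Subgroup.normalClosure (graphProdRels adj G) ≤ φ.ker := by
    apply Subgroup.normalClosure_le_normal
    rintro x ⟨j, k, hadj, gj, gk, rfl⟩
    have hjk : j ≠ i ∨ k ≠ i := by
      by_contra h
      push_neg at h
      obtain ⟨h1, h2⟩ := h
      subst h1; subst h2
      exact hirr _ hadj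
    simp only [SetLike.mem_coe, MonoidHom.mem_ker, map_mul, map_inv, hφ,
      Monoid.CoprodI.lift_of]
    rcases hjk with h | h
    · rw [graphProdProj_ne G h]; group
    · rw [graphProdProj_ne G h]; group
  set ψ : GraphProd adj G →* G i :=
    QuotientGroup.lift _ φ (fun x hx => hker hx) with hψ
  have hleft : ∀ g : G i, ψ (GraphProd.of adj G i g) = g := by
    intro g
    simp [hψ, hφ, GraphProd.of, graphProdProj_self]
  intro a b hab
  have := congrArg ψ hab
  rwa [hleft, hleft] at this
end

section
/- For any subset J ⊆ I, the natural map from the graph product Γ(𝒢_J, (G_j)_{j∈J}) over the induced subgraph 𝒢_J to the subgroup Γ_J ≤ Γ generated by the images of the G_j (j ∈ J) is an isomorphism. -/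
namespace GraphProd

open scoped commutatorElement

variable {I : Type*} (adj : I → I → Prop) (G : I → Type*) [∀ i, Group (G i)]

theorem commute_of {i j : I} (h : adj i j) (gi : G i) (gj : G j) :
    Commute (of adj G i gi) (of adj G j gj) := by
  rw [← commutatorElement_eq_one_iff_commute]
  have h2 : ⁅of adj G i gi, of adj G j gj⁆ =
      (QuotientGroup.mk' (Subgroup.normalClosure (graphProdRels adj G)))
      (Monoid.CoprodI.of gi * Monoid.CoprodI.of gj *
        (Monoid.CoprodI.of gi)⁻¹ * (Monoid.CoprodI.of gj)⁻¹) := by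
    simp only [commutatorElement_def, map_mul, map_inv]
    rfl
  rw [h2, QuotientGroup.mk'_apply, QuotientGroup.eq_one_iff]
  exact Subgroup.subset_normalClosure ⟨i, j, h, gi, gj, rfl⟩

/-- Universal property of the graph product. -/
def lift {H : Type*} [Group H] (f : ∀ i, G i →* H)
    (hf : ∀ i j, adj i j → ∀ (gi : G i) (gj : G j), Commute (f i gi) (f j gj)) :
    GraphProd adj G →* H :=
  QuotientGroup.lift _ (Monoid.CoprodI.lift f) (by
    intro x hx
    refine (Subgroup.normalClosure_le_normal
      (N := (Monoid.CoprodI.lift f).ker) ?_) hx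
    rintro y ⟨i, j, h, gi, gj, rfl⟩
    simp only [SetLike.mem_coe, MonoidHom.mem_ker, map_mul, map_inv, Monoid.CoprodI.lift_of]
    rw [(hf i j h gi gj).eq]
    group)

@[simp] theorem lift_of {H : Type*} [Group H] (f : ∀ i, G i →* H)
    (hf : ∀ i j, adj i j → ∀ (gi : G i) (gj : G j), Commute (f i gi) (f j gj))
    (i : I) (g : G i) : lift adj G f hf (of adj G i g) = f i g := by
  show QuotientGroup.lift _ _ _ ((QuotientGroup.mk' _) (Monoid.CoprodI.of g)) = f i g
  rw [QuotientGroup.mk'_apply, QuotientGroup.lift_mk, Monoid.CoprodI.lift_of]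

theorem hom_ext {H : Type*} [Group H] {f g : GraphProd adj G →* H}
    (h : ∀ i, f.comp (of adj G i) = g.comp (of adj G i)) : f = g := by
  apply QuotientGroup.monoidHom_ext
  apply Monoid.CoprodI.ext_hom
  intro i
  ext x
  exact DFunLike.congr_fun (h i) x

theorem iSup_range_of : (⨆ i, (of adj G i).range) = ⊤ := by
  rw [eq_top_iff]
  intro x hx
  obtain ⟨y, rfl⟩ := QuotientGroup.mk'_surjective _ x
  clear hx
  induction y using Monoid.CoprodI.induction_on with
  | one => simpa using Subgroup.one_mem _
  | of i g =>
      exact Subgroup.mem_iSup_of_mem i ⟨g, rfl⟩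
  | mul a b ha hb =>
      rw [map_mul]
      exact Subgroup.mul_mem _ ha hb

end GraphProd

/-- For `J ⊆ I`, the natural map from the graph product over the induced
subgraph `𝒢_J` to the subgroup `Γ_J ≤ Γ` is an isomorphism. -/
theorem graphProd_induced_subgraph_iso {I : Type*} (adj : I → I → Prop) (G : I → Type*)
    [∀ i, Group (G i)] (hsymm : Symmetric adj) (hirr : ∀ i, ¬ adj i i) (J : Set I) :
    ∃ e : GraphProd (fun a b : J => adj a b) (fun j : J => G j) ≃*
        (GraphProd.parab adj G J),
      ∀ (j : J) (g : G j),
        ((e (GraphProd.of (fun a b : J => adj a b) (fun j : J => G j) j g) :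
          GraphProd.parab adj G J) : GraphProd adj G) = GraphProd.of adj G (j : I) g := by
  classical
  set adjJ : J → J → Prop := fun a b => adj a b with hadjJ
  set GJ : J → Type _ := fun j : J => G j with hGJ
  -- the natural map
  set φ : GraphProd adjJ GJ →* GraphProd adj G :=
    GraphProd.lift adjJ GJ (fun j => GraphProd.of adj G (j : I))
      (fun i j h gi gj => GraphProd.commute_of adj G h gi gj) with hφ
  -- the retraction
  set r : GraphProd adj G →* GraphProd adjJ GJ :=
    GraphProd.lift adj G
      (fun i => if h : i ∈ J then GraphProd.of adjJ GJ ⟨i, h⟩ else 1)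
      (by
        intro i j hij gi gj
        by_cases hi : i ∈ J
        · by_cases hj : j ∈ J
          · simp only [dif_pos hi, dif_pos hj]
            exact GraphProd.commute_of adjJ GJ (i := ⟨i, hi⟩) (j := ⟨j, hj⟩) hij gi gj
          · simp only [dif_neg hj, MonoidHom.one_apply]
            exact Commute.one_right _
        · simp only [dif_neg hi, MonoidHom.one_apply]
          exact Commute.one_left _) with hr
  have hretr : r.comp φ = MonoidHom.id _ := by
    apply GraphProd.hom_ext
    intro j
    ext g
    simp [hφ, hr, j.2]
  have hinj : Function.Injective φ := by
    have : Function.LeftInverse r φ := fun x => DFunLike.congr_fun hretr x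
    exact this.injective
  have hrange : φ.range = GraphProd.parab adj G J := by
    rw [MonoidHom.range_eq_map, ← GraphProd.iSup_range_of adjJ GJ,
      Subgroup.map_iSup]
    have h1 : ∀ j : J, ((GraphProd.of adjJ GJ j).range).map φ
        = (GraphProd.of adj G (j : I)).range := by
      intro j
      have h2 : φ.comp (GraphProd.of adjJ GJ j) = GraphProd.of adj G (j : I) := by
        ext g
        simp [hφ]
      rw [MonoidHom.map_range, h2]
    simp_rw [h1]
    rw [GraphProd.parab, iSup_subtype]
  set ψ : GraphProd adjJ GJ →* GraphProd.parab adj G J :=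
    φ.codRestrict _ (fun x => hrange ▸ (⟨x, rfl⟩ : φ x ∈ φ.range)) with hψ
  have hsurj : Function.Surjective ψ := by
    rintro ⟨x, hx⟩
    rw [← hrange] at hx
    obtain ⟨y, rfl⟩ := hx
    exact ⟨y, rfl⟩
  have hinj' : Function.Injective ψ := fun a b h => hinj (congrArg Subtype.val h)
  refine ⟨MulEquiv.ofBijective ψ ⟨hinj', hsurj⟩, ?_⟩
  intro j g
  show ((ψ (GraphProd.of adjJ GJ j g) : GraphProd.parab adj G J) : GraphProd adj G) = _
  simp [hψ, hφ]
end

section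
/- For any subsets J₁, J₂ ⊆ I, the intersection of the parabolic subgroups Γ_{J₁} and Γ_{J₂} of a graph product Γ equals Γ_{J₁ ∩ J₂}. -/
section Retraction

open Classical in
/-- The retraction killing the generators outside `J`. -/
noncomputable def GraphProd.ret {I : Type*} (adj : I → I → Prop) (G : I → Type*)
    [∀ i, Group (G i)] (J : Set I) : GraphProd adj G →* GraphProd adj G :=
  QuotientGroup.lift _
    (Monoid.CoprodI.lift fun i => if i ∈ J then GraphProd.of adj G i else 1)
    (by
      intro x hx
      refine Subgroup.normalClosure_le_normal (N := (Monoid.CoprodI.lift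
        fun i => if i ∈ J then GraphProd.of adj G i else 1).ker) ?_ hx
      rintro y ⟨i, j, hadj, gi, gj, rfl⟩
      simp only [SetLike.mem_coe, MonoidHom.mem_ker, map_mul, map_inv,
        Monoid.CoprodI.lift_of]
      by_cases hi : i ∈ J <;> by_cases hj : j ∈ J <;>
        simp only [hi, hj, if_pos, if_neg, if_true, if_false, MonoidHom.one_apply,
          one_mul, mul_one, inv_one, mul_inv_cancel, mul_inv_cancel_right]
      · -- both in J : this is the image of a relator
        simp only [GraphProd.of, MonoidHom.comp_apply, QuotientGroup.mk'_apply]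
        exact (QuotientGroup.eq_one_iff _).mpr
          (Subgroup.subset_normalClosure (s := graphProdRels adj G)
            ⟨i, j, hadj, gi, gj, rfl⟩))

open Classical in
theorem GraphProd.ret_of {I : Type*} (adj : I → I → Prop) (G : I → Type*)
    [∀ i, Group (G i)] (J : Set I) (i : I) (g : G i) :
    GraphProd.ret adj G J (GraphProd.of adj G i g) =
      if i ∈ J then GraphProd.of adj G i g else 1 := by
  simp only [GraphProd.ret, GraphProd.of, MonoidHom.comp_apply, QuotientGroup.mk'_apply, QuotientGroup.lift_mk',
    QuotientGroup.lift_mk,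
    Monoid.CoprodI.lift_of]
  split_ifs <;> rfl

theorem GraphProd.ret_fix {I : Type*} (adj : I → I → Prop) (G : I → Type*)
    [∀ i, Group (G i)] (J : Set I) {x : GraphProd adj G}
    (hx : x ∈ GraphProd.parab adj G J) : GraphProd.ret adj G J x = x := by
  have : GraphProd.parab adj G J ≤
      (GraphProd.ret adj G J).eqLocus (MonoidHom.id _) := by
    refine iSup₂_le fun j hj => ?_
    rintro _ ⟨g, rfl⟩
    show GraphProd.ret adj G J (GraphProd.of adj G j g) = GraphProd.of adj G j g
    rw [GraphProd.ret_of, if_pos hj]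
  exact this hx

theorem GraphProd.ret_mem {I : Type*} (adj : I → I → Prop) (G : I → Type*)
    [∀ i, Group (G i)] (J J' : Set I) {x : GraphProd adj G}
    (hx : x ∈ GraphProd.parab adj G J') :
    GraphProd.ret adj G J x ∈ GraphProd.parab adj G (J' ∩ J) := by
  have : GraphProd.parab adj G J' ≤
      (GraphProd.parab adj G (J' ∩ J)).comap (GraphProd.ret adj G J) := by
    refine iSup₂_le fun j hj => ?_
    rintro _ ⟨g, rfl⟩
    rw [Subgroup.mem_comap, GraphProd.ret_of]
    split_ifs with h
    · exact le_iSup₂ (f := fun j _ => (GraphProd.of adj G j).range) j ⟨hj, h⟩ ⟨g, rfl⟩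
    · exact one_mem _
  exact this hx

theorem GraphProd.parab_mono {I : Type*} (adj : I → I → Prop) (G : I → Type*)
    [∀ i, Group (G i)] {J J' : Set I} (h : J ⊆ J') :
    GraphProd.parab adj G J ≤ GraphProd.parab adj G J' :=
  iSup₂_le fun j hj => le_iSup₂ (f := fun j _ => (GraphProd.of adj G j).range) j (h hj)

end Retraction

/-- Intersections of parabolic subgroups:
`Γ_{J₁} ⊓ Γ_{J₂} = Γ_{J₁ ∩ J₂}`. -/
theorem graphProd_parab_inter {I : Type*} (adj : I → I → Prop) (G : I → Type*)
    [∀ i, Group (G i)] (hsymm : Symmetric adj) (hirr : ∀ i, ¬ adj i i) (J₁ J₂ : Set I) :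
    GraphProd.parab adj G J₁ ⊓ GraphProd.parab adj G J₂ = GraphProd.parab adj G (J₁ ∩ J₂) := by
  refine le_antisymm ?_ (le_inf (GraphProd.parab_mono adj G Set.inter_subset_left)
    (GraphProd.parab_mono adj G Set.inter_subset_right))
  rintro x ⟨h₁, h₂⟩
  have := GraphProd.ret_mem adj G J₂ J₁ h₁
  rwa [GraphProd.ret_fix adj G J₂ h₂] at this
end

section
/- If J ⊆ I is spherical (any two distinct vertices of J are adjacent in 𝒢), then the subgroup Γ_J of the graph product Γ is isomorphic to the direct product of the groups G_j for j ∈ J. -/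
set_option maxHeartbeats 2000000 in
/-- If `J ⊆ I` is spherical (any two distinct vertices of `J` are adjacent),
then `Γ_J` is isomorphic to the direct product of the `G j`, `j ∈ J`. -/
theorem graphProd_parab_spherical_iso_pi {I : Type*} (adj : I → I → Prop) (G : I → Type*)
    [∀ i, Group (G i)] (hsymm : Symmetric adj) (hirr : ∀ i, ¬ adj i i)
    (J : Finset I) (hJ : (J : Set I).Pairwise adj) :
    Nonempty ((GraphProd.parab adj G ↑J) ≃* ((j : J) → G j)) := by
  classical
  -- the family of homomorphisms into the direct product
  set fb : ∀ i : I, G i →* ((j : J) → G j) :=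
    fun i => if h : i ∈ J then MonoidHom.mulSingle (fun j : J => G (j : I)) ⟨i, h⟩ else 1
    with hfb
  -- the lifted map kills the relators
  have hker : graphProdRels adj G ⊆ (Monoid.CoprodI.lift fb).ker := by
    rintro x ⟨i, j, hij, gi, gj, rfl⟩
    have hcomm : Commute (Monoid.CoprodI.lift fb (Monoid.CoprodI.of gi))
        (Monoid.CoprodI.lift fb (Monoid.CoprodI.of gj)) := by
      rw [Monoid.CoprodI.lift_of, Monoid.CoprodI.lift_of]
      by_cases hi : i ∈ J
      · by_cases hj : j ∈ J
        · have hne : i ≠ j := fun h => hirr i (h ▸ hij)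
          simp only [hfb, dif_pos hi, dif_pos hj, MonoidHom.mulSingle_apply]
          exact Pi.mulSingle_commute (fun h => hne (congrArg Subtype.val h)) _ _
        · simp [hfb, dif_neg hj]
      · simp [hfb, dif_neg hi]
    have :=
      commutatorElement_eq_one_iff_commute.mpr hcomm
    simpa [MonoidHom.mem_ker, commutatorElement_def, map_mul, map_inv] using this
  have hNle : Subgroup.normalClosure (graphProdRels adj G) ≤ (Monoid.CoprodI.lift fb).ker :=
    Subgroup.normalClosure_le_normal hker
  -- the homomorphism φ : GraphProd → Π G j
  set φ : GraphProd adj G →* ((j : J) → G j) :=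
    QuotientGroup.lift _ (Monoid.CoprodI.lift fb) (fun x hx => hNle hx) with hφ
  have hφof : ∀ (i : J) (x : G (i : I)),
      φ (GraphProd.of adj G (i : I) x) = Pi.mulSingle i x := by
    intro i x
    show QuotientGroup.lift _ _ _ (QuotientGroup.mk (Monoid.CoprodI.of x)) = _
    rw [QuotientGroup.lift_mk, Monoid.CoprodI.lift_of]
    simp [hfb, dif_pos i.2]
  -- commuting condition for ψ
  have hc : Pairwise fun (i j : J) => ∀ (x : G (i : I)) (y : G (j : I)),
      Commute (GraphProd.of adj G (i : I) x) (GraphProd.of adj G (j : I) y) := by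
    intro i j hne x y
    have hadj : adj (i : I) (j : I) :=
      hJ i.2 j.2 (fun h => hne (Subtype.ext h))
    have h1 : (QuotientGroup.mk (Monoid.CoprodI.of x * Monoid.CoprodI.of y *
        (Monoid.CoprodI.of x)⁻¹ * (Monoid.CoprodI.of y)⁻¹) : GraphProd adj G) = 1 :=
      (QuotientGroup.eq_one_iff _).mpr
        (Subgroup.subset_normalClosure ⟨(i : I), (j : I), hadj, x, y, rfl⟩)
    have h2 : GraphProd.of adj G (i : I) x * GraphProd.of adj G (j : I) y *
        (GraphProd.of adj G (i : I) x)⁻¹ * (GraphProd.of adj G (j : I) y)⁻¹ = 1 := by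
      simpa [GraphProd.of, QuotientGroup.mk_mul, QuotientGroup.mk_inv] using h1
    have := commutatorElement_eq_one_iff_commute.mp (by simpa [commutatorElement_def] using h2)
    exact this
  set ψ : ((j : J) → G j) →* GraphProd adj G :=
    MonoidHom.noncommPiCoprod (fun i : J => GraphProd.of adj G (i : I)) hc with hψ
  have hψsingle : ∀ (i : J) (x : G (i : I)),
      ψ (Pi.mulSingle i x) = GraphProd.of adj G (i : I) x := by
    intro i x
    rw [hψ]
    exact MonoidHom.noncommPiCoprod_mulSingle (fun i : J => GraphProd.of adj G (i : I)) i x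
  -- φ ∘ ψ = id
  have hcompHom : φ.comp ψ = MonoidHom.id _ := by
    refine MonoidHom.pi_ext fun i x => ?_
    simp only [MonoidHom.comp_apply, MonoidHom.id_apply]
    rw [hψsingle, hφof]
  have hcomp : ∀ g, φ (ψ g) = g := fun g => DFunLike.congr_fun hcompHom g
  have hinj : Function.Injective ψ := by
    intro a b h
    have := congrArg φ h
    rwa [hcomp, hcomp] at this
  -- the range of ψ is the parabolic subgroup
  have hrange : ψ.range = GraphProd.parab adj G (J : Set I) := by
    rw [hψ, MonoidHom.noncommPiCoprod_range, GraphProd.parab]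
    apply le_antisymm
    · exact iSup_le fun i => le_iSup₂
        (f := fun j (_ : j ∈ (J : Set I)) => (GraphProd.of adj G j).range)
        (i : I) (Finset.mem_coe.mpr i.2)
    · exact iSup₂_le fun j hj =>
        le_iSup (fun i : J => (GraphProd.of adj G (i : I)).range) ⟨j, Finset.mem_coe.mp hj⟩
  exact ⟨(MulEquiv.subgroupCongr hrange.symm).trans (MonoidHom.ofInjective hinj).symm⟩
end

section
/- Let G be a group and H₁ < H₂ < G subgroups with H₁ of finite index in H₂ and H₁ separable in G. Then there exists a finite-index normal subgroup Ĝ ⊴ G such that H₂ ∩ Ĝ ≤ H₁. -/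
/-- A subgroup `H` of a group `G` is separable if for every `g ∈ G \ H` there is a
homomorphism `f : G → F` to a finite group `F` with `f g ∉ f(H)`. -/
def SubgroupSeparable {G : Type*} [Group G] (H : Subgroup G) : Prop :=
  ∀ g : G, g ∉ H → ∃ (F : Type) (_ : Group F) (_ : Finite F) (f : G →* F),
    f g ∉ H.map f

private lemma key_aux {G : Type*} [Group G] (H₁ : Subgroup G) (hsep : SubgroupSeparable H₁)
    (g : G) : ∃ K : Subgroup G, K.Normal ∧ K.FiniteIndex ∧
      (g ∉ H₁ → ∀ h ∈ H₁, g * h ∉ K) := by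
  by_cases hg : g ∈ H₁
  · exact ⟨⊤, inferInstance, inferInstance, fun h => absurd hg h⟩
  · obtain ⟨F, _, _, f, hf⟩ := hsep g hg
    haveI : Finite f.range := Subtype.finite
    refine ⟨f.ker, inferInstance, Subgroup.finiteIndex_ker f, fun _ h hh hk => hf ?_⟩
    have h1 : f g * f h = 1 := by rw [← map_mul]; exact hk
    rw [eq_inv_of_mul_eq_one_left h1]
    exact Subgroup.inv_mem _ ⟨h, hh, rfl⟩

/-- If `H₁ ≤ H₂ ≤ G` with `H₁` of finite index in `H₂` and separable in `G`,
then there is a finite-index normal subgroup `Ĝ ⊴ G` with `H₂ ∩ Ĝ ≤ H₁`. -/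
theorem exists_normal_finiteIndex_inter_le {G : Type*} [Group G] (H₁ H₂ : Subgroup G)
    (h12 : H₁ ≤ H₂) (hfi : (H₁.subgroupOf H₂).FiniteIndex)
    (hsep : SubgroupSeparable H₁) :
    ∃ Ghat : Subgroup G, Ghat.Normal ∧ Ghat.FiniteIndex ∧ H₂ ⊓ Ghat ≤ H₁ := by
  classical
  choose K hKn hKfi hKsep using key_aux H₁ hsep
  haveI : Finite (H₂ ⧸ H₁.subgroupOf H₂) := Subgroup.finite_quotient_of_finiteIndex
  set Q := H₂ ⧸ H₁.subgroupOf H₂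
  refine ⟨⨅ q : Q, K (q.out : G), ?_, ?_, ?_⟩
  · constructor
    intro x hx n
    rw [Subgroup.mem_iInf] at hx ⊢
    exact fun q => (hKn _).conj_mem _ (hx q) n
  · exact Subgroup.finiteIndex_iInf fun q => hKfi _
  · rintro g ⟨hg2, hgK⟩
    set q : Q := QuotientGroup.mk (⟨g, hg2⟩ : H₂)
    have hout : (q.out⁻¹ * ⟨g, hg2⟩ : H₂) ∈ H₁.subgroupOf H₂ := by
      rw [← QuotientGroup.eq]
      exact q.out_eq
    by_cases hr : (q.out : G) ∈ H₁
    · have : (q.out : G)⁻¹ * g ∈ H₁ := hout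
      have := H₁.mul_mem hr this
      rwa [mul_inv_cancel_left] at this
    · exfalso
      have hgK' : g ∈ ⨅ q : Q, K (q.out : G) := hgK
      rw [Subgroup.mem_iInf] at hgK'
      refine hKsep _ hr ((q.out : G)⁻¹ * g) hout ?_
      rw [mul_inv_cancel_left]
      exact hgK' q
end

section
/- In a graph product Γ of groups, two words on the alphabet ⊔_{i∈I}(G_i \ {1}) represent the same element of Γ if and only if one can be transformed into the other by a finite sequence of the following moves and their inverses: (M1') insert a subword g g⁻¹ with g ∈ G_i \ {1}; (M2') replace a letter g ∈ G_i \ {1} by a two-letter subword g₁ g₂ with g₁, g₂ ∈ G_i \ {1} and g = g₁g₂; (M3') swap two consecutive letters g ∈ G_i \ {1}, h ∈ G_j \ {1} whenever i and j are adjacent in 𝒢. -/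
/-- One elementary move on words over the alphabet `⊔_i (G i \ {1})`:
(M1') insert a subword `g g⁻¹`; (M2') replace a letter `g = g₁ g₂` by the subword `g₁ g₂`
(all letters in the same `G i`, nontrivial); (M3') swap consecutive letters from adjacent
vertex groups. -/
def graphProdMoveStep {I : Type*} (adj : I → I → Prop) (G : I → Type*) [∀ i, Group (G i)]
    (w₁ w₂ : List (Σ i, G i)) : Prop :=
  (∃ (u v : List (Σ i, G i)) (i : I) (g : G i), g ≠ 1 ∧
      w₁ = u ++ v ∧ w₂ = u ++ (⟨i, g⟩ : Σ i, G i) :: (⟨i, g⁻¹⟩ : Σ i, G i) :: v) ∨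
  (∃ (u v : List (Σ i, G i)) (i : I) (g₁ g₂ : G i), g₁ ≠ 1 ∧ g₂ ≠ 1 ∧ g₁ * g₂ ≠ 1 ∧
      w₁ = u ++ (⟨i, g₁ * g₂⟩ : Σ i, G i) :: v ∧
      w₂ = u ++ (⟨i, g₁⟩ : Σ i, G i) :: (⟨i, g₂⟩ : Σ i, G i) :: v) ∨
  (∃ (u v : List (Σ i, G i)) (i j : I) (g : G i) (h : G j), adj i j ∧ g ≠ 1 ∧ h ≠ 1 ∧
      w₁ = u ++ (⟨i, g⟩ : Σ i, G i) :: (⟨j, h⟩ : Σ i, G i) :: v ∧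
      w₂ = u ++ (⟨j, h⟩ : Σ i, G i) :: (⟨i, g⟩ : Σ i, G i) :: v)

/-- The element of the graph product represented by a word. -/
def graphProdWordProd {I : Type*} (adj : I → I → Prop) (G : I → Type*) [∀ i, Group (G i)]
    (w : List (Σ i, G i)) : GraphProd adj G :=
  (w.map fun l => GraphProd.of adj G l.1 l.2).prod

/-! ### Auxiliary constructions for the proof -/

namespace GPAux

open scoped commutatorElement

variable {I : Type*} (adj : I → I → Prop) (G : I → Type*) [∀ i, Group (G i)]

theorem step_append {w₁ w₂ : List (Σ i, G i)} (a b : List (Σ i, G i))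
    (h : graphProdMoveStep adj G w₁ w₂) :
    graphProdMoveStep adj G (a ++ w₁ ++ b) (a ++ w₂ ++ b) := by
  rcases h with ⟨u, v, i, g, hg, rfl, rfl⟩ |
    ⟨u, v, i, g₁, g₂, hg1, hg2, hg3, rfl, rfl⟩ |
    ⟨u, v, i, j, g, h, hadj, hg, hh, rfl, rfl⟩
  · exact Or.inl ⟨a ++ u, v ++ b, i, g, hg, by simp, by simp⟩
  · exact Or.inr (Or.inl ⟨a ++ u, v ++ b, i, g₁, g₂, hg1, hg2, hg3, by simp, by simp⟩)
  · exact Or.inr (Or.inr ⟨a ++ u, v ++ b, i, j, g, h, hadj, hg, hh, by simp, by simp⟩)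

/-- Quotient of words by the moves. -/
abbrev Q := Quot (graphProdMoveStep adj G)

instance : Monoid (Q adj G) where
  one := Quot.mk _ []
  mul := Quot.lift₂ (fun a b => Quot.mk _ (a ++ b))
    (fun a b₁ b₂ h => Quot.sound (by simpa using step_append adj G a [] h))
    (fun a₁ a₂ b h => Quot.sound (by simpa using step_append adj G [] b h))
  mul_assoc a b c := by
    induction a using Quot.ind
    induction b using Quot.ind
    induction c using Quot.ind
    exact congrArg (Quot.mk _) (List.append_assoc _ _ _)
  one_mul a := Quot.inductionOn a fun a => rfl
  mul_one a := Quot.inductionOn a fun a => congrArg (Quot.mk _) (List.append_nil a)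

theorem mk_mul (a b : List (Σ i, G i)) :
    (Quot.mk (graphProdMoveStep adj G) a : Q adj G) * Quot.mk _ b = Quot.mk _ (a ++ b) := rfl

theorem one_def : (1 : Q adj G) = Quot.mk _ [] := rfl

open Classical in
/-- Vertex group maps into `Q`. -/
noncomputable def qof (i : I) : G i →* Q adj G where
  toFun g := if g = 1 then 1 else Quot.mk _ [⟨i, g⟩]
  map_one' := if_pos rfl
  map_mul' g h := by
    by_cases hg : g = 1
    · subst hg; simp
    by_cases hh : h = 1
    · subst hh; simp
    by_cases hgh : g * h = 1
    · simp only [if_pos hgh, if_neg hg, if_neg hh, mk_mul]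
      have hinv : h = g⁻¹ := eq_inv_of_mul_eq_one_right hgh
      subst hinv
      exact Quot.sound (Or.inl ⟨[], [], i, g, hg, rfl, rfl⟩)
    · simp only [if_neg hgh, if_neg hg, if_neg hh, mk_mul]
      exact Quot.sound (Or.inr (Or.inl ⟨[], [], i, g, h, hg, hh, hgh, rfl, rfl⟩))

theorem qof_ne (i : I) (g : G i) (hg : g ≠ 1) :
    qof adj G i g = Quot.mk _ [⟨i, g⟩] := by
  simp [qof, hg]

theorem qof_comm {i j : I} (hadj : adj i j) (g : G i) (h : G j) :
    qof adj G i g * qof adj G j h = qof adj G j h * qof adj G i g := by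
  by_cases hg : g = 1
  · subst hg; simp
  by_cases hh : h = 1
  · subst hh; simp
  rw [qof_ne adj G i g hg, qof_ne adj G j h hh, mk_mul, mk_mul]
  exact Quot.sound (Or.inr (Or.inr ⟨[], [], i, j, g, h, hadj, hg, hh, rfl, rfl⟩))

/-- The induced monoid hom from the free product. -/
noncomputable def F : Monoid.CoprodI G →* Q adj G := Monoid.CoprodI.lift (qof adj G)

/-- The corresponding hom to the units. -/
noncomputable def F' : Monoid.CoprodI G →* (Q adj G)ˣ := (F adj G).toHomUnits

theorem F'_ker : ∀ x ∈ Subgroup.normalClosure (graphProdRels adj G), F' adj G x = 1 := by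
  intro x hx
  have hsub : graphProdRels adj G ⊆ (F' adj G).ker := by
    rintro x ⟨i, j, hadj, gi, gj, rfl⟩
    show _ ∈ (F' adj G).ker
    rw [MonoidHom.mem_ker]
    rw [show Monoid.CoprodI.of gi * Monoid.CoprodI.of gj * (Monoid.CoprodI.of gi)⁻¹ *
      (Monoid.CoprodI.of gj)⁻¹ = ⁅Monoid.CoprodI.of gi, Monoid.CoprodI.of gj⁆ from rfl,
      map_commutatorElement, commutatorElement_eq_one_iff_mul_comm]
    apply Units.ext
    simp only [Units.val_mul, F', MonoidHom.coe_toHomUnits, F, Monoid.CoprodI.lift_of]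
    exact qof_comm adj G hadj gi gj
  exact MonoidHom.mem_ker.mp (Subgroup.normalClosure_le_normal hsub hx)

/-- The lifted map on the graph product. -/
noncomputable def Φ : GraphProd adj G →* (Q adj G)ˣ :=
  QuotientGroup.lift _ (F' adj G) (fun x hx => MonoidHom.mem_ker.mpr (F'_ker adj G x hx))

theorem Φ_of (i : I) (g : G i) (hg : g ≠ 1) :
    ((Φ adj G (GraphProd.of adj G i g) : (Q adj G)ˣ) : Q adj G) = Quot.mk _ [⟨i, g⟩] := by
  show ((Φ adj G (QuotientGroup.mk (Monoid.CoprodI.of g)) : (Q adj G)ˣ) : Q adj G) = _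
  rw [Φ, QuotientGroup.lift_mk']
  show (F adj G) (Monoid.CoprodI.of g) = _
  rw [F, Monoid.CoprodI.lift_of]
  exact qof_ne adj G i g hg

theorem Φ_word (w : List (Σ i, G i)) (hw : ∀ l ∈ w, l.2 ≠ 1) :
    ((Φ adj G (graphProdWordProd adj G w) : (Q adj G)ˣ) : Q adj G) = Quot.mk _ w := by
  induction w with
  | nil => simp [graphProdWordProd]; rfl
  | cons l t ih =>
    have h1 : graphProdWordProd adj G (l :: t) =
        GraphProd.of adj G l.1 l.2 * graphProdWordProd adj G t := by
      simp [graphProdWordProd]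
    rw [h1, map_mul, Units.val_mul, Φ_of adj G l.1 l.2 (hw l (by simp)),
      ih (fun x hx => hw x (by simp [hx])), mk_mul]
    rfl

theorem comm_in_graphProd {i j : I} (hadj : adj i j) (g : G i) (h : G j) :
    GraphProd.of adj G i g * GraphProd.of adj G j h =
      GraphProd.of adj G j h * GraphProd.of adj G i g := by
  rw [← commutatorElement_eq_one_iff_mul_comm]
  have heq : ⁅GraphProd.of adj G i g, GraphProd.of adj G j h⁆ =
      (QuotientGroup.mk' (Subgroup.normalClosure (graphProdRels adj G)))
        ⁅Monoid.CoprodI.of g, Monoid.CoprodI.of h⁆ := by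
    rw [map_commutatorElement]; rfl
  rw [heq, QuotientGroup.mk'_apply]
  exact (QuotientGroup.eq_one_iff _).mpr
    (Subgroup.subset_normalClosure ⟨i, j, hadj, g, h, rfl⟩)

theorem step_prod {w₁ w₂ : List (Σ i, G i)} (h : graphProdMoveStep adj G w₁ w₂) :
    graphProdWordProd adj G w₁ = graphProdWordProd adj G w₂ := by
  rcases h with ⟨u, v, i, g, hg, rfl, rfl⟩ |
    ⟨u, v, i, g₁, g₂, hg1, hg2, hg3, rfl, rfl⟩ |
    ⟨u, v, i, j, g, h, hadj, hg, hh, rfl, rfl⟩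
  · simp [graphProdWordProd, ← mul_assoc, ← map_mul]
  · simp [graphProdWordProd, ← mul_assoc, ← map_mul]
  · simp only [graphProdWordProd, List.map_append, List.prod_append, List.map_cons,
      List.prod_cons]
    rw [← mul_assoc (GraphProd.of adj G i g) (GraphProd.of adj G j h),
      comm_in_graphProd adj G hadj g h, mul_assoc]

end GPAux

/-- Two words on the alphabet `⊔_i (G i \ {1})` represent the same element
of the graph product iff one can be transformed into the other by a finite sequence of the
moves (M1')–(M3') and their inverses (i.e. iff they are related by the equivalence relation
generated by the elementary moves). -/
theorem graphProd_word_eq_iff_moves {I : Type*} (adj : I → I → Prop) (G : I → Type*)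
    [∀ i, Group (G i)] (hsymm : Symmetric adj) (hirr : ∀ i, ¬ adj i i)
    (w₁ w₂ : List (Σ i, G i)) (h₁ : ∀ l ∈ w₁, l.2 ≠ 1) (h₂ : ∀ l ∈ w₂, l.2 ≠ 1) :
    graphProdWordProd adj G w₁ = graphProdWordProd adj G w₂ ↔
      Relation.EqvGen (graphProdMoveStep adj G) w₁ w₂ := by
  constructor
  · intro h
    have := congrArg (fun x => ((GPAux.Φ adj G x : (GPAux.Q adj G)ˣ) : GPAux.Q adj G)) h
    simp only [GPAux.Φ_word adj G w₁ h₁, GPAux.Φ_word adj G w₂ h₂] at this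
    exact Quot.eq.mp this
  · intro h
    clear h₁ h₂
    induction h with
    | rel x y hxy => exact GPAux.step_prod adj G hxy
    | refl x => rfl
    | symm x y _ ih => exact ih.symm
    | trans x y z _ _ ih1 ih2 => exact ih1.trans ih2
end

section
/- Let J ⊆ I be spherical, let J^⊥ = (⋂_{j∈J} star(j)) \ J be the set of vertices adjacent to every element of J but not in J, and let J^⊥̲ = J ∪ J^⊥. Then in the graph product Γ, the subgroup Γ_{J^⊥̲} is the internal direct product of Γ_J and Γ_{J^⊥}: every element of Γ_J commutes with every element of Γ_{J^⊥}, Γ_J ∩ Γ_{J^⊥} = {1}, and Γ_{J^⊥̲} = Γ_J · Γ_{J^⊥}. -/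
open scoped commutatorElement in
lemma GraphProd.of_commute {I : Type*} (adj : I → I → Prop) (G : I → Type*)
    [∀ i, Group (G i)] {i j : I} (h : adj i j) (gi : G i) (gj : G j) :
    Commute (GraphProd.of adj G i gi) (GraphProd.of adj G j gj) := by
  rw [← commutatorElement_eq_one_iff_commute]
  have : ((QuotientGroup.mk' (Subgroup.normalClosure (graphProdRels adj G)))
      ⁅Monoid.CoprodI.of gi, Monoid.CoprodI.of gj⁆ : GraphProd adj G) = 1 := by
    rw [QuotientGroup.mk'_apply, QuotientGroup.eq_one_iff]
    exact Subgroup.subset_normalClosure ⟨i, j, h, gi, gj, by rw [commutatorElement_def]⟩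
  rw [show GraphProd.of adj G i gi =
      (QuotientGroup.mk' (Subgroup.normalClosure (graphProdRels adj G))) (Monoid.CoprodI.of gi) from rfl,
    show GraphProd.of adj G j gj =
      (QuotientGroup.mk' (Subgroup.normalClosure (graphProdRels adj G))) (Monoid.CoprodI.of gj) from rfl,
    ← map_commutatorElement]
  exact this

lemma GraphProd.of_mem_parab {I : Type*} (adj : I → I → Prop) (G : I → Type*)
    [∀ i, Group (G i)] {J : Set I} {i : I} (hi : i ∈ J) (g : G i) :
    GraphProd.of adj G i g ∈ GraphProd.parab adj G J :=
  (le_iSup₂ (f := fun j (_ : j ∈ J) => (GraphProd.of adj G j).range) i hi) ⟨g, rfl⟩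

lemma GraphProd.parab_le_centralizer {I : Type*} {adj : I → I → Prop} {G : I → Type*}
    [∀ i, Group (G i)] {K : Set I} {c : GraphProd adj G}
    (h : ∀ k ∈ K, ∀ g : G k, Commute c (GraphProd.of adj G k g)) :
    GraphProd.parab adj G K ≤ Subgroup.centralizer {c} := by
  apply iSup₂_le
  intro k hk
  rintro _ ⟨g, rfl⟩
  rw [Subgroup.mem_centralizer_iff]
  rintro s hs
  rw [Set.mem_singleton_iff] at hs
  subst hs
  exact (h k hk g).eq

lemma GraphProd.parab_commute {I : Type*} {adj : I → I → Prop} {G : I → Type*}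
    [∀ i, Group (G i)] {J K : Set I} (h : ∀ j ∈ J, ∀ k ∈ K, adj j k) :
    ∀ a ∈ GraphProd.parab adj G J, ∀ b ∈ GraphProd.parab adj G K, Commute a b := by
  intro a ha b hb
  have h1 : ∀ k ∈ K, ∀ g : G k, Commute a (GraphProd.of adj G k g) := by
    intro k hk g
    have h2 : GraphProd.parab adj G J ≤ Subgroup.centralizer {GraphProd.of adj G k g} :=
      GraphProd.parab_le_centralizer (fun j hj g' =>
        (GraphProd.of_commute adj G (h j hj k hk) g' g).symm)
    exact (Subgroup.mem_centralizer_iff.mp (h2 ha) _ rfl).symm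
  exact Subgroup.mem_centralizer_iff.mp (GraphProd.parab_le_centralizer h1 hb) a rfl

open Classical in
noncomputable def GraphProd.retr {I : Type*} (adj : I → I → Prop) (G : I → Type*)
    [∀ i, Group (G i)] (J : Set I) : GraphProd adj G →* GraphProd adj G :=
  QuotientGroup.lift _
    (Monoid.CoprodI.lift (fun i => if _ : i ∈ J then GraphProd.of adj G i else 1)) <| by
    intro x hx
    refine Subgroup.normalClosure_le_normal ?_ hx
    rintro _ ⟨i, j, hij, gi, gj, rfl⟩
    simp only [SetLike.mem_coe, MonoidHom.mem_ker, map_mul, map_inv, Monoid.CoprodI.lift_of]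
    rw [← commutatorElement_def, commutatorElement_eq_one_iff_commute]
    by_cases hi : i ∈ J
    · by_cases hj : j ∈ J
      · simp only [dif_pos hi, dif_pos hj]
        exact GraphProd.of_commute adj G hij gi gj
      · simp [dif_neg hj]
    · simp [dif_neg hi]

open Classical in
lemma GraphProd.retr_of {I : Type*} (adj : I → I → Prop) (G : I → Type*)
    [∀ i, Group (G i)] (J : Set I) (i : I) (g : G i) :
    GraphProd.retr adj G J (GraphProd.of adj G i g) =
      if _ : i ∈ J then GraphProd.of adj G i g else 1 := by
  show GraphProd.retr adj G J
      ((QuotientGroup.mk' (Subgroup.normalClosure (graphProdRels adj G))) (Monoid.CoprodI.of g)) = _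
  rw [GraphProd.retr, QuotientGroup.mk'_apply, QuotientGroup.lift_mk, Monoid.CoprodI.lift_of]
  split <;> simp

/-- For spherical `J`, with `J^⊥` the set of vertices adjacent to every
element of `J` but not in `J`, the subgroup `Γ_{J^⊥̲}` (where `J^⊥̲ = J ∪ J^⊥`) is the
internal direct product of `Γ_J` and `Γ_{J^⊥}`. -/
theorem graphProd_parab_perp_internal_directProduct {I : Type*}
    (adj : I → I → Prop) (G : I → Type*) [∀ i, Group (G i)]
    (hsymm : Symmetric adj) (hirr : ∀ i, ¬ adj i i)
    (J : Set I) (hJ : J.Pairwise adj) :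
    (∀ a ∈ GraphProd.parab adj G J,
      ∀ b ∈ GraphProd.parab adj G {i | i ∉ J ∧ ∀ j ∈ J, adj i j}, Commute a b) ∧
    (GraphProd.parab adj G J ⊓ GraphProd.parab adj G {i | i ∉ J ∧ ∀ j ∈ J, adj i j} = ⊥) ∧
    (∀ x : GraphProd adj G,
      x ∈ GraphProd.parab adj G (J ∪ {i | i ∉ J ∧ ∀ j ∈ J, adj i j}) ↔
        ∃ a ∈ GraphProd.parab adj G J,
          ∃ b ∈ GraphProd.parab adj G {i | i ∉ J ∧ ∀ j ∈ J, adj i j}, x = a * b) := by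
  set K : Set I := {i | i ∉ J ∧ ∀ j ∈ J, adj i j} with hK
  have hadj : ∀ j ∈ J, ∀ k ∈ K, adj j k := fun j hj k hk => hsymm (hk.2 j hj)
  have hcomm := GraphProd.parab_commute (G := G) hadj
  refine ⟨hcomm, ?_, ?_⟩
  · -- trivial intersection, via the retraction onto Γ_J
    have hfix : ∀ a ∈ GraphProd.parab adj G J, GraphProd.retr adj G J a = a := by
      have h1 : GraphProd.parab adj G J ≤
          MonoidHom.eqLocus (GraphProd.retr adj G J) (MonoidHom.id _) := by
        apply iSup₂_le
        rintro j hj _ ⟨g, rfl⟩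
        show GraphProd.retr adj G J (GraphProd.of adj G j g) = GraphProd.of adj G j g
        rw [GraphProd.retr_of, dif_pos hj]
      exact fun a ha => h1 ha
    have hkill : GraphProd.parab adj G K ≤ (GraphProd.retr adj G J).ker := by
      apply iSup₂_le
      rintro k hk _ ⟨g, rfl⟩
      rw [MonoidHom.mem_ker, GraphProd.retr_of, dif_neg hk.1]
    rw [eq_bot_iff]
    rintro x ⟨hx1, hx2⟩
    rw [Subgroup.mem_bot]
    calc x = GraphProd.retr adj G J x := (hfix x hx1).symm
    _ = 1 := hkill hx2
  · -- product decomposition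
    have hJle : GraphProd.parab adj G J ≤ GraphProd.parab adj G (J ∪ K) :=
      biSup_mono (fun i hi => Or.inl hi)
    have hKle : GraphProd.parab adj G K ≤ GraphProd.parab adj G (J ∪ K) :=
      biSup_mono (fun i hi => Or.inr hi)
    set S : Subgroup (GraphProd adj G) :=
      { carrier := {x | ∃ a ∈ GraphProd.parab adj G J, ∃ b ∈ GraphProd.parab adj G K, x = a * b}
        one_mem' := ⟨1, one_mem _, 1, one_mem _, (one_mul 1).symm⟩
        mul_mem' := by
          rintro x y ⟨a1, ha1, b1, hb1, rfl⟩ ⟨a2, ha2, b2, hb2, rfl⟩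
          refine ⟨a1 * a2, mul_mem ha1 ha2, b1 * b2, mul_mem hb1 hb2, ?_⟩
          exact (hcomm a2 ha2 b1 hb1).symm.mul_mul_mul_comm a1 b2
        inv_mem' := by
          intro x hx
          obtain ⟨a, ha, b, hb, rfl⟩ := hx
          refine ⟨a⁻¹, inv_mem ha, b⁻¹, inv_mem hb, ?_⟩
          rw [mul_inv_rev]
          exact ((hcomm a ha b hb).inv_inv).symm.eq } with hS
    have le1 : GraphProd.parab adj G (J ∪ K) ≤ S := by
      apply iSup₂_le
      rintro i hi _ ⟨g, rfl⟩
      rcases hi with hi | hi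
      · exact ⟨GraphProd.of adj G i g, GraphProd.of_mem_parab adj G hi g, 1, one_mem _,
          (mul_one _).symm⟩
      · exact ⟨1, one_mem _, GraphProd.of adj G i g, GraphProd.of_mem_parab adj G hi g,
          (one_mul _).symm⟩
    intro x
    constructor
    · exact fun hx => le1 hx
    · rintro ⟨a, ha, b, hb, rfl⟩
      exact mul_mem (hJle ha) (hKle hb)
end
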